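/- Let c be a real constant with ν_obs + c > 0 and define the single-imputation variance estimator under ML imputation σ̂²_SI,M = σ²·(U_obs/(n − 1))·(1 + (U_imp + (n_obs/n)·n_mis·Z̄_imp²)/(ν_obs + c)). Then E[σ̂²_SI,M] − σ² = −σ²·n_mis·(c·n + n_obs − 1)/((n − 1)·n·(c + n_obs − 1)). -/

import Mathlib

open MeasureTheory ProbabilityTheory NNReal Real Set
open scoped ENNReal

section Helpers

open MeasureTheory ProbabilityTheory NNReal Real Set
open scoped ENNReal

lemma aux_rpow_shift {a x : ℝ} (hx0 : 0 < x) : x ^ (a - 1) * x = x ^ a := by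
  calc x ^ (a - 1) * x = x ^ (a - 1) * x ^ (1:ℝ) := by rw [Real.rpow_one]
    _ = x ^ (a - 1 + 1) := (Real.rpow_add hx0 _ _).symm
    _ = x ^ a := by ring_nf

lemma aux_gamma_fun_eq (a r : ℝ) :
    (fun x : ℝ => gammaPDFReal a r x * x)
      = (Ioi (0:ℝ)).indicator (fun x => gammaPDFReal a r x * x) := by
  funext x
  rcases lt_trichotomy x 0 with hx | hx | hx
  · rw [Set.indicator_of_notMem (by simpa using hx.le.not_gt)]
    simp [gammaPDFReal, hx.not_ge]
  · subst hx; simp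
  · rw [Set.indicator_of_mem (mem_Ioi.mpr hx)]

lemma aux_gamma_integrableOn {a r : ℝ} (ha : 0 < a) (hr : 0 < r) :
    IntegrableOn (fun x : ℝ => gammaPDFReal a r x * x) (Ioi 0) := by
  have h := (integrableOn_rpow_mul_exp_neg_mul_rpow (s := a) (p := 1)
      (by linarith) one_pos hr).const_mul (r ^ a / Real.Gamma a)
  refine MeasureTheory.IntegrableOn.congr_fun h (fun x hx => ?_) measurableSet_Ioi
  have hx0 : (0:ℝ) < x := hx
  rw [gammaPDFReal, if_pos hx0.le, Real.rpow_one, neg_mul, ← aux_rpow_shift (a := a) hx0]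
  ring

lemma aux_gamma_pdf_eq (a r : ℝ) :
    gammaPDF a r = fun x => (((gammaPDFReal a r x).toNNReal : ℝ≥0) : ℝ≥0∞) := rfl

lemma aux_gamma_smul_eq {a r : ℝ} (ha : 0 < a) (hr : 0 < r) :
    (fun x : ℝ => (gammaPDFReal a r x).toNNReal • x)
      = fun x => gammaPDFReal a r x * x := by
  funext x
  rw [NNReal.smul_def, Real.coe_toNNReal _ (gammaPDFReal_nonneg ha hr x), smul_eq_mul]

lemma aux_gamma_integrable {a r : ℝ} (ha : 0 < a) (hr : 0 < r) :
    Integrable (id : ℝ → ℝ) (gammaMeasure a r) := by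
  rw [gammaMeasure, aux_gamma_pdf_eq, integrable_withDensity_iff_integrable_smul
    (measurable_gammaPDFReal a r).real_toNNReal]
  have := aux_gamma_smul_eq ha hr
  simp only [id_eq] at this ⊢
  rw [this, aux_gamma_fun_eq]
  exact (aux_gamma_integrableOn ha hr).integrable_indicator measurableSet_Ioi

lemma aux_gamma_integral {a r : ℝ} (ha : 0 < a) (hr : 0 < r) :
    ∫ x, x ∂(gammaMeasure a r) = a / r := by
  rw [gammaMeasure, aux_gamma_pdf_eq, integral_withDensity_eq_integral_smul
    (measurable_gammaPDFReal a r).real_toNNReal]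
  rw [aux_gamma_smul_eq ha hr, aux_gamma_fun_eq, integral_indicator measurableSet_Ioi]
  have h2 : ∫ x in Ioi (0:ℝ), gammaPDFReal a r x * x
      = ∫ x in Ioi (0:ℝ), (r ^ a / Real.Gamma a) * (x ^ (a + 1 - 1) * Real.exp (-(r * x))) := by
    refine setIntegral_congr_fun measurableSet_Ioi (fun x hx => ?_)
    have hx0 : (0:ℝ) < x := hx
    have : a + 1 - 1 = a := by ring
    rw [gammaPDFReal, if_pos hx0.le, this, ← aux_rpow_shift (a := a) hx0]
    ring
  rw [h2, integral_const_mul, integral_rpow_mul_exp_neg_mul_Ioi (by linarith) hr]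
  have hG : Real.Gamma (a + 1) = a * Real.Gamma a := Real.Gamma_add_one ha.ne'
  have hAB : r ^ a * (1 / r) ^ (a + 1) = 1 / r := by
    rw [Real.rpow_add (by positivity), Real.rpow_one, ← mul_assoc,
      ← Real.mul_rpow hr.le (by positivity), mul_one_div_cancel hr.ne', Real.one_rpow, one_mul]
  have hGne : Real.Gamma a ≠ 0 := (Real.Gamma_pos_of_pos ha).ne'
  rw [hG]
  calc r ^ a / Real.Gamma a * ((1/r) ^ (a+1) * (a * Real.Gamma a))
      = (r ^ a * (1/r) ^ (a+1)) * a * (Real.Gamma a / Real.Gamma a) := by ring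
    _ = a / r := by rw [hAB, div_self hGne]; ring

open MeasureTheory ProbabilityTheory NNReal Real Set
open scoped ENNReal

lemma aux_gauss_pdf_sq {v : ℝ≥0} (hv : v ≠ 0) :
    (fun x : ℝ => gaussianPDFReal 0 v x * x ^ 2)
      = fun x : ℝ => (√(2 * π * v))⁻¹ * (x ^ (2:ℝ) * Real.exp (-(2 * (v:ℝ))⁻¹ * x ^ 2)) := by
  funext x
  rw [gaussianPDFReal, Real.rpow_two]
  have hvpos : (0:ℝ) < v := by positivity
  have : -(x - 0) ^ 2 / (2 * (v:ℝ)) = -(2 * (v:ℝ))⁻¹ * x ^ 2 := by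
    field_simp
    ring
  rw [this]
  ring

lemma aux_gauss_sq_integrable {v : ℝ≥0} (hv : v ≠ 0) :
    Integrable (fun x : ℝ => x ^ 2) (gaussianReal 0 v) := by
  have hvpos : (0:ℝ) < v := by positivity
  have hb : (0:ℝ) < (2 * (v:ℝ))⁻¹ := by positivity
  rw [gaussianReal_of_var_ne_zero 0 hv]
  have hpdf : gaussianPDF 0 v = fun x => (((gaussianPDFReal 0 v x).toNNReal : ℝ≥0) : ℝ≥0∞) := rfl
  rw [hpdf, integrable_withDensity_iff_integrable_smul
    (measurable_gaussianPDFReal 0 v).real_toNNReal]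
  have heq : (fun x : ℝ => (gaussianPDFReal 0 v x).toNNReal • (x ^ 2))
      = fun x => gaussianPDFReal 0 v x * x ^ 2 := by
    funext x
    rw [NNReal.smul_def, Real.coe_toNNReal _ (gaussianPDFReal_nonneg 0 v x), smul_eq_mul]
  rw [heq, aux_gauss_pdf_sq hv]
  exact (integrable_rpow_mul_exp_neg_mul_sq hb (by norm_num : (-1:ℝ) < 2)).const_mul _

lemma aux_integral_sq_exp {b : ℝ} (hb : 0 < b) :
    ∫ x : ℝ, x ^ 2 * Real.exp (-b * x ^ 2) = (1 / b) ^ ((3:ℝ)/2) * Real.Gamma (3/2) := by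
  have h1 : ∫ x : ℝ, x ^ 2 * Real.exp (-b * x ^ 2)
      = 2 * ∫ x in Ioi (0:ℝ), x ^ 2 * Real.exp (-b * x ^ 2) := by
    rw [← integral_comp_abs (f := fun x => x ^ 2 * Real.exp (-b * x ^ 2))]
    congr 1
    funext x
    rw [sq_abs]
  have h3 := integral_comp_rpow_Ioi_of_pos
    (g := fun t : ℝ => t ^ ((3:ℝ)/2 - 1) * Real.exp (-(b * t))) (p := (2:ℝ)) (by norm_num)
  calc ∫ x : ℝ, x ^ 2 * Real.exp (-b * x ^ 2)
      = 2 * ∫ x in Ioi (0:ℝ), x ^ 2 * Real.exp (-b * x ^ 2) := h1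
    _ = ∫ x in Ioi (0:ℝ), ((2:ℝ) * x ^ ((2:ℝ) - 1)) •
          ((fun t : ℝ => t ^ ((3:ℝ)/2 - 1) * Real.exp (-(b * t))) (x ^ (2:ℝ))) := by
        rw [← integral_const_mul]
        refine setIntegral_congr_fun measurableSet_Ioi (fun x hx => ?_)
        have hx0 : (0:ℝ) < x := hx
        have e1 : x ^ ((2:ℝ) - 1) = x := by
          norm_num
        have e2 : (x ^ (2:ℝ)) ^ ((3:ℝ)/2 - 1) = x := by
          rw [← Real.rpow_mul hx0.le]
          norm_num
        have e3 : Real.exp (-(b * x ^ (2:ℝ))) = Real.exp (-b * x ^ 2) := by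
          rw [Real.rpow_two, neg_mul]
        show 2 * (x ^ 2 * Real.exp (-b * x ^ 2))
            = ((2:ℝ) * x ^ ((2:ℝ) - 1)) •
              ((x ^ (2:ℝ)) ^ ((3:ℝ)/2 - 1) * Real.exp (-(b * x ^ (2:ℝ))))
        rw [smul_eq_mul, e1, e2, e3]
        ring
    _ = ∫ y in Ioi (0:ℝ), (fun t : ℝ => t ^ ((3:ℝ)/2 - 1) * Real.exp (-(b * t))) y := h3
    _ = (1 / b) ^ ((3:ℝ)/2) * Real.Gamma (3/2) := by
        exact integral_rpow_mul_exp_neg_mul_Ioi (by norm_num : (0:ℝ) < 3/2) hb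

lemma aux_gauss_sq_integral {v : ℝ≥0} (hv : v ≠ 0) :
    ∫ x, x ^ 2 ∂(gaussianReal 0 v) = (v:ℝ) := by
  have hvpos : (0:ℝ) < v := by positivity
  have hb : (0:ℝ) < (2 * (v:ℝ))⁻¹ := by positivity
  rw [gaussianReal_of_var_ne_zero 0 hv]
  have hpdf : gaussianPDF 0 v = fun x => (((gaussianPDFReal 0 v x).toNNReal : ℝ≥0) : ℝ≥0∞) := rfl
  rw [hpdf, integral_withDensity_eq_integral_smul
    (measurable_gaussianPDFReal 0 v).real_toNNReal]
  have heq : (fun x : ℝ => (gaussianPDFReal 0 v x).toNNReal • (x ^ 2))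
      = fun x => gaussianPDFReal 0 v x * x ^ 2 := by
    funext x
    rw [NNReal.smul_def, Real.coe_toNNReal _ (gaussianPDFReal_nonneg 0 v x), smul_eq_mul]
  rw [heq, aux_gauss_pdf_sq hv]
  have : (fun x : ℝ => (√(2 * π * v))⁻¹ * (x ^ (2:ℝ) * Real.exp (-(2 * (v:ℝ))⁻¹ * x ^ 2)))
      = fun x : ℝ => (√(2 * π * v))⁻¹ * (x ^ 2 * Real.exp (-(2 * (v:ℝ))⁻¹ * x ^ 2)) := by
    funext x; rw [Real.rpow_two]
  rw [this, integral_const_mul, aux_integral_sq_exp hb]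
  have h1b : (1:ℝ) / (2 * (v:ℝ))⁻¹ = 2 * (v:ℝ) := by field_simp
  rw [h1b]
  have hG : Real.Gamma (3/2) = √π / 2 := by
    have := Real.Gamma_add_one (by norm_num : (1/2 : ℝ) ≠ 0)
    rw [Real.Gamma_one_half_eq] at this
    norm_num at this
    rw [show (3/2 : ℝ) = 1/2 + 1 by norm_num, Real.Gamma_add_one (by norm_num : (1/2:ℝ) ≠ 0),
      Real.Gamma_one_half_eq]
    ring
  have h32 : (2 * (v:ℝ)) ^ ((3:ℝ)/2) = 2 * (v:ℝ) * √(2 * (v:ℝ)) := by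
    rw [show (3/2 : ℝ) = 1 + 1/2 by norm_num, Real.rpow_add (by positivity), Real.rpow_one,
      ← Real.sqrt_eq_rpow]
  have hsqrt : √(2 * π * (v:ℝ)) = √(2 * (v:ℝ)) * √π := by
    rw [show 2 * π * (v:ℝ) = (2 * (v:ℝ)) * π by ring, Real.sqrt_mul (by positivity)]
  rw [hG, h32, hsqrt]
  have hs2v : (0:ℝ) < √(2 * (v:ℝ)) := Real.sqrt_pos.mpr (by positivity)
  have hspi : (0:ℝ) < √π := Real.sqrt_pos.mpr Real.pi_pos
  field_simp

end Helpers

open MeasureTheory ProbabilityTheory NNReal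

set_option maxHeartbeats 1000000 in
/-- bias of the single-imputation variance estimator under ML imputation
`σ̂²_SI,M = σ²·(U_obs/(n−1))·(1 + (U_imp + (n_obs/n)·n_mis·Z̄_imp²)/(ν_obs + c))`. -/
theorem stmt7
    {Ω : Type*} [MeasurableSpace Ω] (P : Measure Ω) [IsProbabilityMeasure P]
    (μ σ : ℝ) (hσ : 0 < σ)
    (n_obs n_mis : ℕ) (hnobs : 2 ≤ n_obs) (hnmis : 2 ≤ n_mis)
    (U_obs Z_obs Z_imp U_imp : Ω → ℝ)
    (hUmeas : Measurable U_obs) (hZmeas : Measurable Z_obs)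
    (hZimpmeas : Measurable Z_imp) (hUimpmeas : Measurable U_imp)
    (hU : P.map U_obs = gammaMeasure (((n_obs : ℝ) - 1) / 2) (1 / 2))
    (hZ : P.map Z_obs = gaussianReal 0 (1 / (n_obs : ℝ≥0)))
    (hZimp : P.map Z_imp = gaussianReal 0 (1 / (n_mis : ℝ≥0)))
    (hUimp : P.map U_imp = gammaMeasure (((n_mis : ℝ) - 1) / 2) (1 / 2))
    (hindep : iIndepFun ![U_obs, Z_obs, Z_imp, U_imp] P)
    (c : ℝ) (hc : 0 < ((n_obs : ℝ) - 1) + c) :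
    (∫ ω, σ ^ 2 * (U_obs ω / (((n_obs : ℝ) + (n_mis : ℝ)) - 1))
        * (1 + (U_imp ω + ((n_obs : ℝ) / ((n_obs : ℝ) + (n_mis : ℝ)))
            * (n_mis : ℝ) * Z_imp ω ^ 2) / (((n_obs : ℝ) - 1) + c)) ∂P) - σ ^ 2
      = -σ ^ 2 * ((n_mis : ℝ) * (c * ((n_obs : ℝ) + (n_mis : ℝ)) + (n_obs : ℝ) - 1))
          / ((((n_obs : ℝ) + (n_mis : ℝ)) - 1) * ((n_obs : ℝ) + (n_mis : ℝ))
              * (c + (n_obs : ℝ) - 1)) := by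
  have hno2 : (2:ℝ) ≤ (n_obs:ℝ) := by exact_mod_cast hnobs
  have hnm2 : (2:ℝ) ≤ (n_mis:ℝ) := by exact_mod_cast hnmis
  have hao : (0:ℝ) < ((n_obs:ℝ) - 1) / 2 := by linarith
  have ham : (0:ℝ) < ((n_mis:ℝ) - 1) / 2 := by linarith
  have hr : (0:ℝ) < 1 / 2 := by norm_num
  have hnm0 : (n_mis:ℝ≥0) ≠ 0 := Nat.cast_ne_zero.mpr (by omega)
  have hv : (1 / (n_mis:ℝ≥0)) ≠ 0 := one_div_ne_zero hnm0
  -- integrability of the basic variables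
  have hUint : Integrable U_obs P := by
    have h := aux_gamma_integrable hao hr
    rw [← hU] at h
    have := (integrable_map_measure aestronglyMeasurable_id hUmeas.aemeasurable).mp h
    simpa [Function.comp] using this
  have hUiint : Integrable U_imp P := by
    have h := aux_gamma_integrable ham hr
    rw [← hUimp] at h
    have := (integrable_map_measure aestronglyMeasurable_id hUimpmeas.aemeasurable).mp h
    simpa [Function.comp] using this
  have hZ2int : Integrable (fun ω => Z_imp ω ^ 2) P := by
    have h := aux_gauss_sq_integrable hv
    rw [← hZimp] at h
    have := (integrable_map_measure (by fun_prop) hZimpmeas.aemeasurable).mp h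
    simpa [Function.comp_def] using this
  -- expectations of the basic variables
  have hUval : ∫ ω, U_obs ω ∂P = (n_obs:ℝ) - 1 := by
    have h := integral_map (μ := P) (φ := U_obs) (f := fun x : ℝ => x)
      hUmeas.aemeasurable aestronglyMeasurable_id
    rw [hU, aux_gamma_integral hao hr] at h
    rw [← h]
    field_simp
  have hUival : ∫ ω, U_imp ω ∂P = (n_mis:ℝ) - 1 := by
    have h := integral_map (μ := P) (φ := U_imp) (f := fun x : ℝ => x)
      hUimpmeas.aemeasurable aestronglyMeasurable_id
    rw [hUimp, aux_gamma_integral ham hr] at h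
    rw [← h]
    field_simp
  have hZ2val : ∫ ω, Z_imp ω ^ 2 ∂P = 1 / (n_mis:ℝ) := by
    have h := integral_map (μ := P) (φ := Z_imp) (f := fun x : ℝ => x ^ 2)
      hZimpmeas.aemeasurable (measurable_id.pow_const 2).aestronglyMeasurable
    rw [hZimp, aux_gauss_sq_integral hv] at h
    rw [← h]
    push_cast
    simp
  -- independence
  have h03 : IndepFun U_obs U_imp P := by
    have := hindep.indepFun (show (0:Fin 4) ≠ 3 by decide)
    simpa using this
  have h02 : IndepFun U_obs Z_imp P := by
    have := hindep.indepFun (show (0:Fin 4) ≠ 2 by decide)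
    simpa using this
  have hUZ2 : IndepFun U_obs (fun ω => Z_imp ω ^ 2) P := by
    have := h02.comp measurable_id (measurable_id.pow_const 2)
    simpa [Function.comp_def] using this
  -- products
  have hm1 : Integrable (fun ω => U_obs ω * U_imp ω) P :=
    h03.integrable_mul hUint hUiint
  have hm2 : Integrable (fun ω => U_obs ω * Z_imp ω ^ 2) P :=
    hUZ2.integrable_mul hUint hZ2int
  have hv1 : ∫ ω, U_obs ω * U_imp ω ∂P = ((n_obs:ℝ) - 1) * ((n_mis:ℝ) - 1) := by
    have := h03.integral_fun_mul_eq_mul_integral hUint.1 hUiint.1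
    rw [hUval, hUival] at this
    exact this
  have hv2 : ∫ ω, U_obs ω * Z_imp ω ^ 2 ∂P = ((n_obs:ℝ) - 1) * (1 / (n_mis:ℝ)) := by
    have := hUZ2.integral_fun_mul_eq_mul_integral hUint.1 hZ2int.1
    rw [hUval, hZ2val] at this
    exact this
  -- abbreviations
  have hN1 : (((n_obs:ℝ) + (n_mis:ℝ)) - 1) ≠ 0 := by linarith
  have hNne : ((n_obs:ℝ) + (n_mis:ℝ)) ≠ 0 := by linarith
  have hd : (((n_obs:ℝ) - 1) + c) ≠ 0 := hc.ne'
  have hnmne : (n_mis:ℝ) ≠ 0 := by linarith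
  have hfun : (fun ω => σ ^ 2 * (U_obs ω / (((n_obs : ℝ) + (n_mis : ℝ)) - 1))
        * (1 + (U_imp ω + ((n_obs : ℝ) / ((n_obs : ℝ) + (n_mis : ℝ)))
            * (n_mis : ℝ) * Z_imp ω ^ 2) / (((n_obs : ℝ) - 1) + c)))
      = fun ω => (σ ^ 2 / (((n_obs : ℝ) + (n_mis : ℝ)) - 1)) * U_obs ω
          + ((σ ^ 2 / ((((n_obs : ℝ) + (n_mis : ℝ)) - 1) * (((n_obs : ℝ) - 1) + c)))
              * (U_obs ω * U_imp ω)
            + (σ ^ 2 * (((n_obs : ℝ) / ((n_obs : ℝ) + (n_mis : ℝ))) * (n_mis : ℝ))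
                / ((((n_obs : ℝ) + (n_mis : ℝ)) - 1) * (((n_obs : ℝ) - 1) + c)))
              * (U_obs ω * Z_imp ω ^ 2)) := by
    funext ω
    field_simp
  have hgint : Integrable (fun ω =>
      (σ ^ 2 / ((((n_obs : ℝ) + (n_mis : ℝ)) - 1) * (((n_obs : ℝ) - 1) + c)))
          * (U_obs ω * U_imp ω)
        + (σ ^ 2 * (((n_obs : ℝ) / ((n_obs : ℝ) + (n_mis : ℝ))) * (n_mis : ℝ))
            / ((((n_obs : ℝ) + (n_mis : ℝ)) - 1) * (((n_obs : ℝ) - 1) + c)))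
          * (U_obs ω * Z_imp ω ^ 2)) P :=
    (hm1.const_mul _).add (hm2.const_mul _)
  rw [hfun, integral_add (hUint.const_mul _) hgint,
    integral_add (hm1.const_mul _) (hm2.const_mul _),
    integral_const_mul, integral_const_mul, integral_const_mul, hUval, hv1, hv2]
  have hd2 : c + (n_obs:ℝ) - 1 ≠ 0 := by intro h; apply hd; linarith
  field_simp
  ring
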